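/- Let A be an n×n positive semidefinite symmetric matrix with eigenvalues s₁ ≥ ⋯ ≥ s_n ≥ 0, and B an r×r positive semidefinite symmetric matrix with eigenvalues 0 ≤ d₁ ≤ ⋯ ≤ d_r, where r ≤ n. Then the minimum over Y ∈ R^{n×r} of ‖A − YY^T‖_F² + 2⟨B, Y^T Y⟩ equals Σ_{i=1}^n s_i² − Σ_{i=1}^r [(s_i − d_i)₊]². -/

import Mathlib

open Matrix Finset

namespace Stmt1Aux

lemma fin_sum_ext' {N : ℕ} (g : Fin N → ℝ) :
    ∑ i, g i = ∑ k ∈ range N, (if h : k < N then g ⟨k, h⟩ else 0) := by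
  rw [← Fin.sum_univ_eq_sum_range (fun k => if h : k < N then g ⟨k, h⟩ else 0) N]
  refine Finset.sum_congr rfl fun i _ => ?_
  rw [dif_pos i.isLt]

lemma range_to_filter {N : ℕ} (g : Fin N → ℝ) (k : ℕ) (hk : k ≤ N) :
    ∑ i ∈ range k, (if h : i < N then g ⟨i, h⟩ else 0)
      = ∑ i ∈ univ.filter (fun i : Fin N => (i : ℕ) < k), g i := by
  rw [Finset.sum_filter,
    fin_sum_ext' (fun i : Fin N => if (i : ℕ) < k then g i else 0)]
  rw [← Finset.sum_subset (Finset.range_subset_range.2 hk)]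
  · refine Finset.sum_congr rfl fun i hi => ?_
    have h1 : i < N := (Finset.mem_range.1 hi).trans_le hk
    rw [dif_pos h1, dif_pos h1, if_pos (Finset.mem_range.1 hi)]
  · intro i _ hi2
    have : ¬ i < k := fun h => hi2 (Finset.mem_range.2 h)
    split
    · simp [this]
    · rfl

lemma refl_sum (f : ℕ → ℝ) (r k : ℕ) (hk : k ≤ r) :
    ∑ i ∈ range k, f (r - 1 - i)
      = ∑ i ∈ range r, f i - ∑ i ∈ range (r - k), f i := by
  have h1 : ∑ i ∈ range r, f i = ∑ i ∈ range (r - k), f i + ∑ i ∈ Ico (r - k) r, f i := by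
    simp only [Finset.range_eq_Ico]
    rw [← Finset.sum_Ico_consecutive _ (Nat.zero_le (r - k)) (Nat.sub_le r k)]
  have h2 : ∑ i ∈ Ico (r - k) r, f i = ∑ i ∈ range k, f (r - k + i) := by
    rw [Finset.sum_Ico_eq_sum_range]
    have h : r - (r - k) = k := by omega
    rw [h]
  have h3 : ∑ i ∈ range k, f (r - k + i) = ∑ i ∈ range k, f (r - 1 - i) := by
    rw [← Finset.sum_range_reflect (fun i => f (r - k + i)) k]
    refine Finset.sum_congr rfl fun i hi => ?_
    have := Finset.mem_range.1 hi
    congr 1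
    omega
  rw [h1, h2, h3]
  ring

lemma card_filter_lt_le {N : ℕ} (k : ℕ) :
    ((univ.filter (fun i : Fin N => (i : ℕ) < k)).card : ℝ) ≤ (k : ℝ) := by
  have h : (univ.filter (fun i : Fin N => (i : ℕ) < k)).card ≤ k := by
    refine le_trans ?_ (le_of_eq (Finset.card_range k))
    apply Finset.card_le_card_of_injOn (fun i : Fin N => (i : ℕ))
    · intro a ha
      exact Finset.mem_range.2 (Finset.mem_filter.1 ha).2
    · intro a _ b _ hab
      exact Fin.val_injective hab
  exact_mod_cast h



lemma dot_self_nonneg' {N : ℕ} (x : Fin N → ℝ) : 0 ≤ x ⬝ᵥ x :=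
  Finset.sum_nonneg fun i _ => mul_self_nonneg _

lemma abel (m : ℕ) (a q μ : ℕ → ℝ)
    (hmono : ∀ i j, i ≤ j → j < m → a j ≤ a i)
    (h0 : ∀ i, i < m → 0 ≤ a i)
    (hpre : ∀ k, k ≤ m → ∑ i ∈ range k, q i ≤ ∑ i ∈ range k, μ i) :
    ∑ i ∈ range m, a i * q i ≤ ∑ i ∈ range m, a i * μ i := by
  induction m generalizing a with
  | zero => simp
  | succ m ih =>
    have key : ∀ f : ℕ → ℝ, ∑ i ∈ range (m+1), a i * f i
        = (∑ i ∈ range m, (a i - a m) * f i) + a m * ∑ i ∈ range (m+1), f i := by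
      intro f
      simp only [sub_mul, Finset.sum_sub_distrib, Finset.mul_sum, Finset.sum_range_succ]
      rw [← Finset.mul_sum]
      ring
    have h1 : ∑ i ∈ range m, (a i - a m) * q i ≤ ∑ i ∈ range m, (a i - a m) * μ i := by
      apply ih
      · intro i j hij hj
        exact sub_le_sub_right (hmono i j hij (hj.trans (Nat.lt_succ_self m))) _
      · intro i hi
        exact sub_nonneg.2 (hmono i m hi.le (Nat.lt_succ_self m))
      · intro k hk
        exact hpre k (hk.trans (Nat.le_succ m))
    have h2 : a m * ∑ i ∈ range (m+1), q i ≤ a m * ∑ i ∈ range (m+1), μ i :=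
      mul_le_mul_of_nonneg_left (hpre (m+1) le_rfl) (h0 m (Nat.lt_succ_self m))
    rw [key q, key μ]
    linarith

lemma topk (r k : ℕ) (lam ρ : ℕ → ℝ)
    (hmono : ∀ i j, i ≤ j → j < r → lam j ≤ lam i)
    (h0 : ∀ i, i < r → 0 ≤ lam i)
    (hρ0 : ∀ i, i < r → 0 ≤ ρ i) (hρ1 : ∀ i, i < r → ρ i ≤ 1)
    (hsum : ∑ i ∈ range r, ρ i ≤ (k : ℝ)) :
    ∑ i ∈ range r, lam i * ρ i ≤ ∑ i ∈ range (min k r), lam i := by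
  rcases le_or_gt r k with h | h
  · rw [min_eq_right h]
    apply Finset.sum_le_sum
    intro i hi
    exact mul_le_of_le_one_right (h0 i (mem_range.1 hi)) (hρ1 i (mem_range.1 hi))
  · rw [min_eq_left h.le]
    have hkr : k ≤ r := h.le
    have hsplit : ∀ f : ℕ → ℝ, ∑ i ∈ range r, f i
        = ∑ i ∈ range k, f i + ∑ i ∈ Ico k r, f i := by
      intro f
      simp only [range_eq_Ico]
      exact (Finset.sum_Ico_consecutive _ (Nat.zero_le k) hkr).symm
    have hc0 : 0 ≤ lam k := h0 k h
    have b1 : ∑ i ∈ range k, lam i * ρ i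
        ≤ ∑ i ∈ range k, (lam i + lam k * (ρ i - 1)) := by
      apply Finset.sum_le_sum
      intro i hi
      have hik : i < k := mem_range.1 hi
      have h1 : lam k ≤ lam i := hmono i k hik.le h
      have h2 : ρ i ≤ 1 := hρ1 i (hik.trans h)
      nlinarith [hρ0 i (hik.trans h)]
    have b2 : ∑ i ∈ Ico k r, lam i * ρ i ≤ ∑ i ∈ Ico k r, lam k * ρ i := by
      apply Finset.sum_le_sum
      intro i hi
      have := mem_Ico.1 hi
      exact mul_le_mul_of_nonneg_right (hmono k i this.1 this.2) (hρ0 i this.2)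
    have e1 : ∑ i ∈ range k, (lam i + lam k * (ρ i - 1))
        = ∑ i ∈ range k, lam i + lam k * (∑ i ∈ range k, ρ i - k) := by
      simp only [Finset.sum_add_distrib, mul_sub, mul_one, Finset.sum_sub_distrib,
        Finset.mul_sum]
      simp [Finset.sum_const, mul_comm]
    have e2 : ∑ i ∈ Ico k r, lam k * ρ i = lam k * ∑ i ∈ Ico k r, ρ i := by
      rw [Finset.mul_sum]
    have hρtot : ∑ i ∈ range k, ρ i + ∑ i ∈ Ico k r, ρ i ≤ (k : ℝ) := by
      rw [← hsplit ρ]; exact hsum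
    have : lam k * (∑ i ∈ range k, ρ i - k) + lam k * ∑ i ∈ Ico k r, ρ i ≤ 0 := by
      have := mul_le_mul_of_nonneg_left (by linarith : (∑ i ∈ range k, ρ i - k) + ∑ i ∈ Ico k r, ρ i ≤ 0) hc0
      linarith [this]
    calc ∑ i ∈ range r, lam i * ρ i
        = ∑ i ∈ range k, lam i * ρ i + ∑ i ∈ Ico k r, lam i * ρ i := hsplit _
      _ ≤ ∑ i ∈ range k, (lam i + lam k * (ρ i - 1)) + ∑ i ∈ Ico k r, lam k * ρ i := by
          linarith
      _ = ∑ i ∈ range k, lam i + (lam k * (∑ i ∈ range k, ρ i - k) + lam k * ∑ i ∈ Ico k r, ρ i) := by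
          rw [e1, e2]; ring
      _ ≤ ∑ i ∈ range k, lam i := by linarith





lemma dot_sum_right {N : ℕ} {ι : Type*} (J : Finset ι) (x : Fin N → ℝ)
    (f : ι → Fin N → ℝ) : x ⬝ᵥ (∑ j ∈ J, f j) = ∑ j ∈ J, x ⬝ᵥ f j := by
  simp only [dotProduct, Finset.sum_apply, Finset.mul_sum]
  exact Finset.sum_comm

lemma dot_sum_left {N : ℕ} {ι : Type*} (J : Finset ι) (x : Fin N → ℝ)
    (f : ι → Fin N → ℝ) : (∑ j ∈ J, f j) ⬝ᵥ x = ∑ j ∈ J, f j ⬝ᵥ x := by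
  simp only [dotProduct, Finset.sum_apply, Finset.sum_mul]
  exact Finset.sum_comm

lemma parseval {m : ℕ} (w : Fin m → Fin m → ℝ)
    (hw : ∀ i j, w i ⬝ᵥ w j = if i = j then (1:ℝ) else 0)
    (x : Fin m → ℝ) : ∑ j, (x ⬝ᵥ w j)^2 = x ⬝ᵥ x := by
  set W : Matrix (Fin m) (Fin m) ℝ := Matrix.of w with hWdef
  have hW : W * Wᵀ = 1 := by
    ext i j
    simp only [Matrix.mul_apply, Matrix.one_apply, Matrix.transpose_apply, hWdef,
      Matrix.of_apply]
    simpa [dotProduct] using hw i j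
  have hW2 : Wᵀ * W = 1 := mul_eq_one_comm.mp hW
  have h3 : Wᵀ *ᵥ (W *ᵥ x) = x := by
    rw [Matrix.mulVec_mulVec, hW2, Matrix.one_mulVec]
  have h4 : x ⬝ᵥ (Wᵀ *ᵥ (W *ᵥ x)) = (W *ᵥ x) ⬝ᵥ (W *ᵥ x) := by
    rw [Matrix.dotProduct_mulVec, Matrix.vecMul_transpose]
  have h5 : (W *ᵥ x) ⬝ᵥ (W *ᵥ x) = ∑ j, (x ⬝ᵥ w j)^2 := by
    simp only [dotProduct, Matrix.mulVec, Matrix.of_apply, hWdef, pow_two]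
    refine Finset.sum_congr rfl fun j _ => ?_
    simp [dotProduct, mul_comm]
  rw [← h5, ← h4, h3]

lemma bessel {m N : ℕ} (J : Finset (Fin m)) (z : Fin m → Fin N → ℝ) (lam : Fin m → ℝ)
    (hz : ∀ j ∈ J, ∀ k ∈ J, z j ⬝ᵥ z k = if j = k then lam j else 0)
    (hpos : ∀ j ∈ J, 0 < lam j) (x : Fin N → ℝ) :
    ∑ j ∈ J, (x ⬝ᵥ z j)^2 / lam j ≤ x ⬝ᵥ x := by
  set S : Fin N → ℝ := ∑ j ∈ J, ((x ⬝ᵥ z j) / lam j) • z j with hS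
  have h0 : 0 ≤ (x - S) ⬝ᵥ (x - S) := dot_self_nonneg' _
  have hxS : x ⬝ᵥ S = ∑ j ∈ J, (x ⬝ᵥ z j)^2 / lam j := by
    rw [hS, dot_sum_right]
    refine Finset.sum_congr rfl fun j hj => ?_
    rw [dotProduct_smul]
    have := (hpos j hj).ne'
    field_simp
    simp only [smul_eq_mul]
    field_simp
  have hSx : S ⬝ᵥ x = ∑ j ∈ J, (x ⬝ᵥ z j)^2 / lam j := by
    rw [dotProduct_comm]; exact hxS
  have hSS : S ⬝ᵥ S = ∑ j ∈ J, (x ⬝ᵥ z j)^2 / lam j := by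
    rw [hS, dot_sum_left]
    have : ∀ j ∈ J, ((x ⬝ᵥ z j) / lam j) • z j ⬝ᵥ (∑ k ∈ J, ((x ⬝ᵥ z k) / lam k) • z k)
        = (x ⬝ᵥ z j)^2 / lam j := by
      intro j hj
      rw [smul_dotProduct, dot_sum_right]
      have hinner : ∀ k ∈ J, z j ⬝ᵥ ((x ⬝ᵥ z k) / lam k) • z k
          = if j = k then ((x ⬝ᵥ z j) / lam j) * lam j else 0 := by
        intro k hk
        rw [dotProduct_smul, hz j hj k hk]
        by_cases h : j = k
        · subst h; simp
        · simp [h]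
      rw [Finset.sum_congr rfl hinner, Finset.sum_ite_eq J j
        (fun _ => ((x ⬝ᵥ z j) / lam j) * lam j)]
      simp only [hj, if_true, smul_eq_mul]
      have := (hpos j hj).ne'
      field_simp
    rw [Finset.sum_congr rfl this]
  have hexp : (x - S) ⬝ᵥ (x - S)
      = x ⬝ᵥ x - ∑ j ∈ J, (x ⬝ᵥ z j)^2 / lam j := by
    rw [sub_dotProduct, dotProduct_sub, dotProduct_sub, hxS, hSx, hSS]
    ring
  rw [hexp] at h0
  linarith

lemma vmv_mul_vmv {N M K : ℕ} (a : Fin N → ℝ) (b c : Fin M → ℝ) (d : Fin K → ℝ) :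
    vecMulVec a b * vecMulVec c d = (b ⬝ᵥ c) • vecMulVec a d := by
  ext i j
  simp only [Matrix.mul_apply, Matrix.vecMulVec_apply, Matrix.smul_apply, smul_eq_mul,
    dotProduct, Finset.sum_mul]
  refine Finset.sum_congr rfl fun k _ => by ring



lemma sumvmv_mulVec {N K : ℕ} {ι : Type*} [Fintype ι] (a : ι → ℝ)
    (p : ι → Fin N → ℝ) (q : ι → Fin K → ℝ) (x : Fin K → ℝ) :
    (∑ i, a i • vecMulVec (p i) (q i)) *ᵥ x = ∑ i, (a i * (q i ⬝ᵥ x)) • p i := by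
  ext y
  simp only [Matrix.mulVec, dotProduct, Matrix.sum_apply, Matrix.smul_apply,
    Matrix.vecMulVec_apply, smul_eq_mul, Finset.sum_apply, Pi.smul_apply, Finset.sum_mul]
  rw [Finset.sum_comm]
  refine Finset.sum_congr rfl fun i _ => ?_
  rw [Finset.mul_sum, Finset.sum_mul]
  refine Finset.sum_congr rfl fun k _ => by ring

lemma frob_lsum {N K : ℕ} {ι : Type*} [Fintype ι] (a : ι → ℝ)
    (p : ι → Fin N → ℝ) (q : ι → Fin K → ℝ) (Z : Matrix (Fin N) (Fin K) ℝ) :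
    ∑ x, ∑ y, (∑ i, a i • vecMulVec (p i) (q i)) x y * Z x y
      = ∑ i, a i * (p i ⬝ᵥ (Z *ᵥ q i)) := by
  simp only [Matrix.sum_apply, Matrix.smul_apply, Matrix.vecMulVec_apply, smul_eq_mul,
    Finset.sum_mul]
  have e1 : ∀ x : Fin N, ∑ y : Fin K, ∑ i, a i * (p i x * q i y) * Z x y
      = ∑ i, ∑ y : Fin K, a i * (p i x * q i y) * Z x y := fun x => Finset.sum_comm
  rw [Finset.sum_congr rfl fun x _ => e1 x, Finset.sum_comm]
  refine Finset.sum_congr rfl fun i _ => ?_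
  simp only [dotProduct, Matrix.mulVec, Finset.mul_sum]
  refine Finset.sum_congr rfl fun x _ => Finset.sum_congr rfl fun y _ => by ring

lemma trace_sumvmv_mul {K : ℕ} {ι : Type*} [Fintype ι] (a : ι → ℝ)
    (p q : ι → Fin K → ℝ) (C : Matrix (Fin K) (Fin K) ℝ) :
    Matrix.trace ((∑ i, a i • vecMulVec (p i) (q i)) * C)
      = ∑ i, a i * (q i ⬝ᵥ (C *ᵥ p i)) := by
  simp only [Matrix.trace, Matrix.diag_apply, Matrix.mul_apply, Matrix.sum_apply,
    Matrix.smul_apply, Matrix.vecMulVec_apply, smul_eq_mul, Finset.sum_mul]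
  rw [Finset.sum_comm]
  refine Finset.sum_congr rfl fun i _ => ?_
  simp only [dotProduct, Matrix.mulVec, Finset.mul_sum]
  rw [Finset.sum_comm]
  refine Finset.sum_congr rfl fun x _ => Finset.sum_congr rfl fun y _ => by ring

lemma dot_mulVec_mulVec {N K : ℕ} (Y : Matrix (Fin N) (Fin K) ℝ) (a b : Fin K → ℝ) :
    (Y *ᵥ a) ⬝ᵥ (Y *ᵥ b) = a ⬝ᵥ ((Yᵀ * Y) *ᵥ b) := by
  rw [Matrix.dotProduct_mulVec (Y *ᵥ a) Y b, ← Matrix.mulVec_transpose,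
    Matrix.mulVec_mulVec]
  rw [dotProduct_comm, Matrix.dotProduct_mulVec, ← Matrix.mulVec_transpose,
    Matrix.transpose_mul, Matrix.transpose_transpose]
  exact dotProduct_comm _ _

lemma fin_sum_ext {N : ℕ} (g : Fin N → ℝ) :
    ∑ i, g i = ∑ k ∈ range N, (if h : k < N then g ⟨k, h⟩ else 0) := by
  rw [← Fin.sum_univ_eq_sum_range (fun k => if h : k < N then g ⟨k, h⟩ else 0) N]
  refine Finset.sum_congr rfl fun i _ => ?_
  rw [dif_pos i.isLt]



lemma collapse_smul {N K : ℕ} (w : Fin K → Fin N → ℝ)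
    (hw : ∀ i j, w i ⬝ᵥ w j = if i = j then (1:ℝ) else 0) (c : Fin K → ℝ) (i : Fin K) :
    ∑ k, (c k * (w k ⬝ᵥ w i)) • w k = c i • w i := by
  have h : ∀ k, (c k * (w k ⬝ᵥ w i)) • w k = if k = i then c i • w i else 0 := by
    intro k
    rw [hw k i]
    by_cases h : k = i
    · subst h; simp
    · simp [h]
  rw [Finset.sum_congr rfl fun k _ => h k, Finset.sum_ite_eq' Finset.univ i]
  simp

lemma sum_castLE {n r : ℕ} (hr : r ≤ n) (f : Fin n → ℝ)
    (hf : ∀ i : Fin n, r ≤ i.val → f i = 0) :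
    ∑ i, f i = ∑ j : Fin r, f (Fin.castLE hr j) := by
  rw [fin_sum_ext f, fin_sum_ext (fun j : Fin r => f (Fin.castLE hr j))]
  rw [← Finset.sum_subset (Finset.range_subset_range.2 hr)]
  · refine Finset.sum_congr rfl fun k hk => ?_
    have hkr : k < r := Finset.mem_range.1 hk
    have hkn : k < n := hkr.trans_le hr
    rw [dif_pos hkn, dif_pos hkr]
    rfl
  · intro k hk hk2
    have hkn : k < n := Finset.mem_range.1 hk
    rw [dif_pos hkn]
    exact hf _ (le_of_not_gt (fun h => hk2 (Finset.mem_range.2 h)))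

lemma val_eq (n r : ℕ)
    (A : Matrix (Fin n) (Fin n) ℝ) (B : Matrix (Fin r) (Fin r) ℝ)
    (s : Fin n → ℝ) (d : Fin r → ℝ)
    (u : Fin n → Fin n → ℝ) (v : Fin r → Fin r → ℝ)
    (hu : ∀ i j, u i ⬝ᵥ u j = if i = j then (1 : ℝ) else 0)
    (hv : ∀ i j, v i ⬝ᵥ v j = if i = j then (1 : ℝ) else 0)
    (hA : A = ∑ i, s i • Matrix.vecMulVec (u i) (u i))
    (hB : B = ∑ i, d i • Matrix.vecMulVec (v i) (v i))
    (Y : Matrix (Fin n) (Fin r) ℝ) :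
    (∑ i, ∑ j, ((A - Y * Yᵀ) i j) ^ 2) + 2 * Matrix.trace (B * (Yᵀ * Y))
    = (∑ i, (s i)^2) - 2 * ∑ i, s i * ((Yᵀ *ᵥ u i) ⬝ᵥ (Yᵀ *ᵥ u i))
      + Matrix.trace ((Yᵀ * Y) * (Yᵀ * Y))
      + 2 * ∑ j, d j * (v j ⬝ᵥ ((Yᵀ * Y) *ᵥ v j)) := by
  set M : Matrix (Fin n) (Fin n) ℝ := Y * Yᵀ with hM
  have hsq : (∑ i, ∑ j, ((A - M) i j) ^ 2)
      = (∑ x, ∑ y, A x y * A x y) - 2 * (∑ x, ∑ y, A x y * M x y)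
        + ∑ x, ∑ y, M x y * M x y := by
    have h : ∀ x y, ((A - M) x y)^2
        = A x y * A x y - 2 * (A x y * M x y) + M x y * M x y := by
      intro x y; simp only [Matrix.sub_apply]; ring
    simp only [h, Finset.sum_add_distrib, Finset.sum_sub_distrib, ← Finset.mul_sum]
  have hAA : ∑ x, ∑ y, A x y * A x y = ∑ i, (s i)^2 := by
    nth_rewrite 1 [hA]
    rw [frob_lsum]
    refine Finset.sum_congr rfl fun i _ => ?_
    rw [hA, sumvmv_mulVec, collapse_smul u hu s i, dotProduct_smul, hu i i]
    simp [pow_two]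
  have hAM : ∑ x, ∑ y, A x y * M x y = ∑ i, s i * ((Yᵀ *ᵥ u i) ⬝ᵥ (Yᵀ *ᵥ u i)) := by
    nth_rewrite 1 [hA]
    rw [frob_lsum]
    refine Finset.sum_congr rfl fun i _ => ?_
    congr 1
    rw [dot_mulVec_mulVec Yᵀ (u i) (u i), Matrix.transpose_transpose]
  have hMM : ∑ x, ∑ y, M x y * M x y = Matrix.trace ((Yᵀ * Y) * (Yᵀ * Y)) := by
    have h1 : ∑ x, ∑ y, M x y * M x y = Matrix.trace (M * Mᵀ) := by
      simp only [Matrix.trace, Matrix.diag_apply, Matrix.mul_apply, Matrix.transpose_apply]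
    rw [h1]
    have h2 : Mᵀ = M := by rw [hM, Matrix.transpose_mul, Matrix.transpose_transpose]
    rw [h2, hM, Matrix.mul_assoc, ← Matrix.mul_assoc Yᵀ Y Yᵀ, Matrix.trace_mul_comm]
    rw [Matrix.mul_assoc, Matrix.mul_assoc]
  have hBC : Matrix.trace (B * (Yᵀ * Y)) = ∑ j, d j * (v j ⬝ᵥ ((Yᵀ * Y) *ᵥ v j)) := by
    rw [hB, trace_sumvmv_mul]
  rw [hsq, hAA, hAM, hMM, hBC]

section Part3
variable {n r : ℕ}

lemma opt_val (hr : r ≤ n)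
    (A : Matrix (Fin n) (Fin n) ℝ) (B : Matrix (Fin r) (Fin r) ℝ)
    (s : Fin n → ℝ) (d : Fin r → ℝ)
    (u : Fin n → Fin n → ℝ) (v : Fin r → Fin r → ℝ)
    (hu : ∀ i j, u i ⬝ᵥ u j = if i = j then (1 : ℝ) else 0)
    (hv : ∀ i j, v i ⬝ᵥ v j = if i = j then (1 : ℝ) else 0)
    (hA : A = ∑ i, s i • Matrix.vecMulVec (u i) (u i))
    (hB : B = ∑ i, d i • Matrix.vecMulVec (v i) (v i)) :
    ∃ Y : Matrix (Fin n) (Fin r) ℝ,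
      (∑ i, ∑ j, ((A - Y * Yᵀ) i j) ^ 2) + 2 * Matrix.trace (B * (Yᵀ * Y))
      = (∑ i, (s i) ^ 2) - ∑ i : Fin r, (max (s (Fin.castLE hr i) - d i) 0) ^ 2 := by
  set e : Fin r → ℝ := fun j => max (s (Fin.castLE hr j) - d j) 0 with he
  have he0 : ∀ j, 0 ≤ e j := fun j => le_max_right _ _
  set Y : Matrix (Fin n) (Fin r) ℝ :=
    ∑ j, Real.sqrt (e j) • Matrix.vecMulVec (u (Fin.castLE hr j)) (v j) with hY
  refine ⟨Y, ?_⟩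
  have hYT : Yᵀ = ∑ j, Real.sqrt (e j) • Matrix.vecMulVec (v j) (u (Fin.castLE hr j)) := by
    rw [hY, Matrix.transpose_sum]
    refine Finset.sum_congr rfl fun j _ => ?_
    rw [Matrix.transpose_smul]
    congr 1
    ext x y
    simp [Matrix.vecMulVec_apply, mul_comm]
  have hC : Yᵀ * Y = ∑ j, e j • Matrix.vecMulVec (v j) (v j) := by
    rw [hYT, hY, Matrix.sum_mul]
    refine Finset.sum_congr rfl fun j _ => ?_
    rw [Matrix.mul_sum]
    have hterm : ∀ k, (Real.sqrt (e j) • Matrix.vecMulVec (v j) (u (Fin.castLE hr j)))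
        * (Real.sqrt (e k) • Matrix.vecMulVec (u (Fin.castLE hr k)) (v k))
        = if j = k then e j • Matrix.vecMulVec (v j) (v j) else 0 := by
      intro k
      rw [Matrix.smul_mul, Matrix.mul_smul, vmv_mul_vmv, hu]
      by_cases h : j = k
      · subst h
        simp only [Fin.castLE_inj, if_true, if_pos rfl, one_smul, smul_smul]
        rw [Real.mul_self_sqrt (he0 j)]
      · have h2 : Fin.castLE hr j ≠ Fin.castLE hr k := fun hc => h (Fin.castLE_inj.1 hc)
        simp [h2, h]
    rw [Finset.sum_congr rfl fun k _ => hterm k, Finset.sum_ite_eq Finset.univ j]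
    simp
  -- Yᵀ *ᵥ u i
  have hq : ∀ i : Fin n, Yᵀ *ᵥ u i
      = ∑ j, (Real.sqrt (e j) * (u (Fin.castLE hr j) ⬝ᵥ u i)) • v j := by
    intro i
    rw [hYT, sumvmv_mulVec]
  have hqcast : ∀ j : Fin r, Yᵀ *ᵥ u (Fin.castLE hr j) = Real.sqrt (e j) • v j := by
    intro j
    rw [hq]
    have hterm : ∀ k, (Real.sqrt (e k) * (u (Fin.castLE hr k) ⬝ᵥ u (Fin.castLE hr j))) • v k
        = if k = j then Real.sqrt (e j) • v j else 0 := by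
      intro k
      rw [hu]
      by_cases h : k = j
      · subst h; simp
      · have h2 : Fin.castLE hr k ≠ Fin.castLE hr j := fun hc => h (Fin.castLE_inj.1 hc)
        simp [h2, h]
    rw [Finset.sum_congr rfl fun k _ => hterm k, Finset.sum_ite_eq' Finset.univ j]
    simp
  have hqhigh : ∀ i : Fin n, r ≤ i.val → Yᵀ *ᵥ u i = 0 := by
    intro i hi
    rw [hq]
    have hterm : ∀ k, (Real.sqrt (e k) * (u (Fin.castLE hr k) ⬝ᵥ u i)) • v k = 0 := by
      intro k
      have h2 : Fin.castLE hr k ≠ i := by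
        intro hc
        have : (k : ℕ) < r := k.isLt
        rw [← hc] at hi
        simp only [Fin.coe_castLE] at hi
        omega
      rw [hu]
      simp [h2]
    simp [Finset.sum_congr rfl fun k _ => hterm k]
  have hsum_q : ∑ i, s i * ((Yᵀ *ᵥ u i) ⬝ᵥ (Yᵀ *ᵥ u i))
      = ∑ j : Fin r, s (Fin.castLE hr j) * e j := by
    rw [sum_castLE hr _ (fun i hi => by rw [hqhigh i hi]; simp)]
    refine Finset.sum_congr rfl fun j _ => ?_
    rw [hqcast, smul_dotProduct, dotProduct_smul, hv j j]
    have h2 : Real.sqrt (e j) * Real.sqrt (e j) = e j := Real.mul_self_sqrt (he0 j)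
    simp [h2]
  have htj : ∀ j : Fin r, v j ⬝ᵥ ((Yᵀ * Y) *ᵥ v j) = e j := by
    intro j
    rw [hC, sumvmv_mulVec, collapse_smul v hv e j, dotProduct_smul, hv j j]
    simp
  have htr : Matrix.trace ((Yᵀ * Y) * (Yᵀ * Y)) = ∑ j, e j * e j := by
    nth_rewrite 1 [hC]
    rw [trace_sumvmv_mul]
    exact Finset.sum_congr rfl fun j _ => by rw [htj j]
  have hdt : ∑ j, d j * (v j ⬝ᵥ ((Yᵀ * Y) *ᵥ v j)) = ∑ j, d j * e j :=
    Finset.sum_congr rfl fun j _ => by rw [htj j]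
  rw [val_eq n r A B s d u v hu hv hA hB Y, hsum_q, htr, hdt]
  have hfin : ∀ j : Fin r, -(2 * (s (Fin.castLE hr j) * e j)) + e j * e j + 2 * (d j * e j)
      = -(e j ^ 2) := by
    intro j
    rcases le_or_gt (s (Fin.castLE hr j) - d j) 0 with h | h
    · have : e j = 0 := by rw [he]; simp [max_eq_right h]
      rw [this]; ring
    · have : e j = s (Fin.castLE hr j) - d j := by rw [he]; simp [max_eq_left h.le]
      rw [this]; ring
  have hsplit : (∑ i, (s i)^2) - 2 * ∑ j : Fin r, s (Fin.castLE hr j) * e j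
      + ∑ j, e j * e j + 2 * ∑ j, d j * e j
      = (∑ i, (s i)^2) + ∑ j : Fin r,
        (-(2 * (s (Fin.castLE hr j) * e j)) + e j * e j + 2 * (d j * e j)) := by
    simp only [Finset.sum_add_distrib, Finset.sum_neg_distrib, ← Finset.mul_sum]
    ring
  rw [hsplit, Finset.sum_congr rfl fun j _ => hfin j]
  simp only [Finset.sum_neg_distrib]
  ring

end Part3
section Part5
variable {n r : ℕ}

lemma lower_bound (hr : r ≤ n)
    (A : Matrix (Fin n) (Fin n) ℝ) (B : Matrix (Fin r) (Fin r) ℝ)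
    (s : Fin n → ℝ) (d : Fin r → ℝ)
    (u : Fin n → Fin n → ℝ) (v : Fin r → Fin r → ℝ)
    (hu : ∀ i j, u i ⬝ᵥ u j = if i = j then (1 : ℝ) else 0)
    (hv : ∀ i j, v i ⬝ᵥ v j = if i = j then (1 : ℝ) else 0)
    (hA : A = ∑ i, s i • Matrix.vecMulVec (u i) (u i))
    (hB : B = ∑ i, d i • Matrix.vecMulVec (v i) (v i))
    (hs : ∀ i j : Fin n, i ≤ j → s j ≤ s i) (hsn : ∀ i, 0 ≤ s i)
    (hd : ∀ i j : Fin r, i ≤ j → d i ≤ d j) (hdn : ∀ i, 0 ≤ d i)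
    (Y : Matrix (Fin n) (Fin r) ℝ) :
    (∑ i, (s i) ^ 2) - ∑ j : Fin r, (max (s (Fin.castLE hr j) - d j) 0) ^ 2
    ≤ (∑ i, ∑ j, ((A - Y * Yᵀ) i j) ^ 2) + 2 * Matrix.trace (B * (Yᵀ * Y)) := by
  rw [val_eq n r A B s d u v hu hv hA hB Y]
  obtain ⟨C, hCdef⟩ : ∃ M : Matrix (Fin r) (Fin r) ℝ, M = Yᵀ * Y := ⟨_, rfl⟩
  rw [← hCdef]
  -- eigen setup
  have hCps : C.PosSemidef := by
    have := Matrix.posSemidef_conjTranspose_mul_self Y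
    rw [Matrix.conjTranspose_eq_transpose_of_trivial] at this
    rwa [← hCdef] at this
  have hCh : C.IsHermitian := hCps.1
  set lam0 : Fin r → ℝ := hCh.eigenvalues with hlam0def
  set w0 : Fin r → (Fin r → ℝ) := fun k => ⇑(hCh.eigenvectorBasis k) with hw0def
  have heig0 : ∀ k, C *ᵥ w0 k = lam0 k • w0 k := fun k => hCh.mulVec_eigenvectorBasis k
  have horth0 : ∀ i j, w0 i ⬝ᵥ w0 j = if i = j then (1:ℝ) else 0 := by
    intro i j
    have h := (orthonormal_iff_ite.mp hCh.eigenvectorBasis.orthonormal) i j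
    rw [← h]
    simp [EuclideanSpace.inner_eq_star_dotProduct, dotProduct, w0, mul_comm]
  have hnn0 : ∀ k, 0 ≤ lam0 k := fun k => hCps.eigenvalues_nonneg k
  set σ : Equiv.Perm (Fin r) := Tuple.sort lam0 with hσ
  set lam : Fin r → ℝ := fun j => lam0 (σ j.rev) with hlamdef
  set w : Fin r → (Fin r → ℝ) := fun j => w0 (σ j.rev) with hwdef
  have hlam_mono : ∀ i j : Fin r, i ≤ j → lam j ≤ lam i := by
    intro i j hij
    exact Tuple.monotone_sort lam0 (Fin.rev_le_rev.2 hij)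
  have hlam_nn : ∀ j, 0 ≤ lam j := fun j => hnn0 _
  have heig : ∀ j, C *ᵥ w j = lam j • w j := fun j => heig0 _
  have hww : ∀ i j, w i ⬝ᵥ w j = if i = j then (1:ℝ) else 0 := by
    intro i j
    rw [hwdef]
    simp only []
    rw [horth0]
    congr 1
    simp [σ.injective.eq_iff, Fin.rev_inj, eq_iff_iff]
  have hCsum : C = ∑ j, lam j • vecMulVec (w j) (w j) := by
    set W : Matrix (Fin r) (Fin r) ℝ := Matrix.of w with hW
    have hWWT : W * Wᵀ = 1 := by
      ext i j
      simp only [Matrix.mul_apply, Matrix.one_apply, Matrix.transpose_apply, hW,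
        Matrix.of_apply]
      simpa [dotProduct] using hww i j
    have hWTW : Wᵀ * W = 1 := mul_eq_one_comm.mp hWWT
    have h1 : C = C * Wᵀ * W := by rw [Matrix.mul_assoc, hWTW, Matrix.mul_one]
    rw [h1]
    ext i k
    simp only [Matrix.mul_apply, Matrix.sum_apply, Matrix.smul_apply, Matrix.vecMulVec_apply,
      smul_eq_mul, Matrix.transpose_apply, hW, Matrix.of_apply]
    refine Finset.sum_congr rfl fun j _ => ?_
    have h2 : (∑ l, C i l * w j l) = (C *ᵥ w j) i := by
      simp [Matrix.mulVec, dotProduct]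
    rw [h2, heig j]
    simp only [Pi.smul_apply, smul_eq_mul]
    ring
  -- main quantities
  set q : Fin n → ℝ := fun i => (Yᵀ *ᵥ u i) ⬝ᵥ (Yᵀ *ᵥ u i) with hqdef
  set t : Fin r → ℝ := fun j => v j ⬝ᵥ (C *ᵥ v j) with htdef
  set sN : ℕ → ℝ := fun k => if h : k < n then s ⟨k, h⟩ else 0 with hsN
  set dN : ℕ → ℝ := fun k => if h : k < r then d ⟨k, h⟩ else 0 with hdN
  set lamN : ℕ → ℝ := fun k => if h : k < r then lam ⟨k, h⟩ else 0 with hlamN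
  set tN : ℕ → ℝ := fun k => if h : k < r then t ⟨k, h⟩ else 0 with htN
  set qN : ℕ → ℝ := fun k => if h : k < n then q ⟨k, h⟩ else 0 with hqN
  -- expansions
  have hq_expand : ∀ i, q i = ∑ j, (u i ⬝ᵥ (Y *ᵥ w j))^2 := by
    intro i
    rw [hqdef]
    simp only []
    rw [← parseval w hww (Yᵀ *ᵥ u i)]
    refine Finset.sum_congr rfl fun j _ => ?_
    rw [Matrix.mulVec_transpose, ← Matrix.dotProduct_mulVec]
  have ht_expand : ∀ j, t j = ∑ k, lam k * (v j ⬝ᵥ w k)^2 := by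
    intro j
    rw [htdef]
    simp only []
    nth_rewrite 1 [hCsum]
    rw [sumvmv_mulVec, dot_sum_right]
    refine Finset.sum_congr rfl fun k _ => ?_
    rw [dotProduct_smul]
    rw [dotProduct_comm (w k) (v j)]
    simp only [smul_eq_mul, pow_two]
    ring
  have hzorth : ∀ j k, (Y *ᵥ w j) ⬝ᵥ (Y *ᵥ w k) = if j = k then lam j else 0 := by
    intro j k
    rw [dot_mulVec_mulVec, ← hCdef, heig k, dotProduct_smul, hww j k]
    by_cases h : j = k
    · subst h; simp
    · simp [h]
  -- Ky Fan for q
  have kyfanQ : ∀ k : ℕ, k ≤ n →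
      ∑ i ∈ univ.filter (fun i : Fin n => (i : ℕ) < k), q i
        ≤ ∑ jj ∈ range (min k r), lamN jj := by
    intro k hkn
    set I := univ.filter (fun i : Fin n => (i : ℕ) < k) with hI
    set p' : Fin r → ℝ := fun j => ∑ i ∈ I, (u i ⬝ᵥ (Y *ᵥ w j))^2 with hp'
    have hswap : ∑ i ∈ I, q i = ∑ j : Fin r, p' j := by
      rw [Finset.sum_congr rfl fun i _ => hq_expand i]
      exact Finset.sum_comm
    have hp'0 : ∀ j, 0 ≤ p' j := fun j => Finset.sum_nonneg fun i _ => sq_nonneg _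
    have hp'le : ∀ j, p' j ≤ lam j := by
      intro j
      have h1 : p' j ≤ ∑ i : Fin n, (u i ⬝ᵥ (Y *ᵥ w j))^2 :=
        Finset.sum_le_sum_of_subset_of_nonneg (Finset.subset_univ I)
          (fun i _ _ => sq_nonneg _)
      have h2 : ∑ i : Fin n, (u i ⬝ᵥ (Y *ᵥ w j))^2 = (Y *ᵥ w j) ⬝ᵥ (Y *ᵥ w j) := by
        rw [← parseval u hu (Y *ᵥ w j)]
        exact Finset.sum_congr rfl fun i _ => by rw [dotProduct_comm]
      have h3 : (Y *ᵥ w j) ⬝ᵥ (Y *ᵥ w j) = lam j := by rw [hzorth j j]; simp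
      linarith
    set ρ : Fin r → ℝ := fun j => if lam j = 0 then 0 else p' j / lam j with hρ
    have hlamρ : ∀ j, lam j * ρ j = p' j := by
      intro j
      rw [hρ]
      simp only []
      by_cases h : lam j = 0
      · rw [if_pos h, mul_zero]
        have h1 := hp'le j
        rw [h] at h1
        have h2 := hp'0 j
        linarith
      · rw [if_neg h]
        field_simp
    have hρ0 : ∀ j, 0 ≤ ρ j := by
      intro j
      simp only [hρ]
      by_cases h : lam j = 0
      · simp [h]
      · rw [if_neg h]
        exact div_nonneg (hp'0 j) (hlam_nn j)
    have hρ1 : ∀ j, ρ j ≤ 1 := by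
      intro j
      simp only [hρ]
      by_cases h : lam j = 0
      · simp [h]
      · rw [if_neg h]
        exact (div_le_one (lt_of_le_of_ne (hlam_nn j) (Ne.symm h))).2 (hp'le j)
    have hρsum : ∑ j, ρ j ≤ (k : ℝ) := by
      set J : Finset (Fin r) := univ.filter (fun j => lam j ≠ 0) with hJ
      have h1 : ∑ j ∈ J, ρ j = ∑ j, ρ j := by
        rw [hJ]
        refine Finset.sum_filter_of_ne (fun x _ hx => ?_)
        by_contra h0
        apply hx
        simp only [hρ]
        rw [if_pos h0]
      have h2 : ∀ j ∈ J, ρ j = ∑ i ∈ I, (u i ⬝ᵥ (Y *ᵥ w j))^2 / lam j := by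
        intro j hj
        have hjne : lam j ≠ 0 := (Finset.mem_filter.1 hj).2
        simp only [hρ, hp']
        rw [if_neg hjne, Finset.sum_div]
      have h4 : ∀ i : Fin n, ∑ j ∈ J, (u i ⬝ᵥ (Y *ᵥ w j))^2 / lam j ≤ 1 := by
        intro i
        have hbes := bessel J (fun j => Y *ᵥ w j) lam
          (fun j _ k' _ => hzorth j k')
          (fun j hj => lt_of_le_of_ne (hlam_nn j) (Ne.symm (Finset.mem_filter.1 hj).2)) (u i)
        have huii : u i ⬝ᵥ u i = 1 := by rw [hu i i, if_pos rfl]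
        rw [huii] at hbes
        exact hbes
      calc ∑ j, ρ j = ∑ j ∈ J, ρ j := h1.symm
        _ = ∑ j ∈ J, ∑ i ∈ I, (u i ⬝ᵥ (Y *ᵥ w j))^2 / lam j := Finset.sum_congr rfl h2
        _ = ∑ i ∈ I, ∑ j ∈ J, (u i ⬝ᵥ (Y *ᵥ w j))^2 / lam j := Finset.sum_comm
        _ ≤ ∑ i ∈ I, 1 := Finset.sum_le_sum fun i _ => h4 i
        _ = (I.card : ℝ) := by simp
        _ ≤ (k : ℝ) := card_filter_lt_le k
    set ρN : ℕ → ℝ := fun kk => if h : kk < r then ρ ⟨kk, h⟩ else 0 with hρN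
    have htop : ∑ jj ∈ range r, lamN jj * ρN jj ≤ ∑ jj ∈ range (min k r), lamN jj := by
      apply topk r k lamN ρN
      · intro i j hij hjr
        simp only [hlamN]
        rw [dif_pos hjr, dif_pos (lt_of_le_of_lt hij hjr)]
        exact hlam_mono ⟨i, _⟩ ⟨j, _⟩ hij
      · intro i hi
        simp only [hlamN]
        rw [dif_pos hi]
        exact hlam_nn _
      · intro i hi
        simp only [hρN]
        rw [dif_pos hi]
        exact hρ0 _
      · intro i hi
        simp only [hρN]
        rw [dif_pos hi]
        exact hρ1 _
      · have he : ∑ jj ∈ range r, ρN jj = ∑ j, ρ j := by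
          rw [fin_sum_ext' ρ]
        rw [he]
        exact hρsum
    have hq_eq : ∑ i ∈ I, q i = ∑ jj ∈ range r, lamN jj * ρN jj := by
      rw [hswap, Finset.sum_congr rfl fun j (_ : j ∈ univ) => (hlamρ j).symm,
        fin_sum_ext' (fun j => lam j * ρ j)]
      refine Finset.sum_congr rfl fun kk _ => ?_
      by_cases h : kk < r
      · rw [dif_pos h]
        simp only [hlamN, hρN]
        rw [dif_pos h, dif_pos h]
      · rw [dif_neg h]
        simp only [hlamN, hρN]
        rw [dif_neg h, zero_mul]
    rw [hq_eq]
    exact htop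
  -- padding
  have pad_sum : ∀ k : ℕ, ∑ jj ∈ range k, lamN jj = ∑ jj ∈ range (min k r), lamN jj := by
    intro k
    refine (Finset.sum_subset (Finset.range_subset_range.2 (min_le_left k r)) ?_).symm
    intro x hx hx2
    have h1 : ¬ x < min k r := fun hh => hx2 (mem_range.2 hh)
    have h2 : x < k := mem_range.1 hx
    have h3 : ¬ x < r := by omega
    simp only [hlamN]
    rw [dif_neg h3]
  have abelQ : ∑ i, s i * q i ≤ ∑ j : Fin r, s (Fin.castLE hr j) * lam j := by
    have h1 : ∑ i, s i * q i = ∑ kk ∈ range n, sN kk * qN kk := by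
      rw [fin_sum_ext' (fun i => s i * q i)]
      refine Finset.sum_congr rfl fun kk _ => ?_
      by_cases h : kk < n
      · rw [dif_pos h]
        simp only [hsN, hqN]
        rw [dif_pos h, dif_pos h]
      · rw [dif_neg h]
        simp only [hsN, hqN]
        rw [dif_neg h, zero_mul]
    have habel : ∑ kk ∈ range n, sN kk * qN kk ≤ ∑ kk ∈ range n, sN kk * lamN kk := by
      apply abel n sN qN lamN
      · intro i j hij hjn
        simp only [hsN]
        rw [dif_pos hjn, dif_pos (lt_of_le_of_lt hij hjn)]
        exact hs ⟨i, _⟩ ⟨j, _⟩ hij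
      · intro i hi
        simp only [hsN]
        rw [dif_pos hi]
        exact hsn _
      · intro k hk
        have hql : ∑ kk ∈ range k, qN kk
            = ∑ i ∈ univ.filter (fun i : Fin n => (i : ℕ) < k), q i := by
          simp only [hqN]
          exact range_to_filter q k hk
        rw [hql, pad_sum k]
        exact kyfanQ k hk
    have h2 : ∑ kk ∈ range n, sN kk * lamN kk = ∑ j : Fin r, s (Fin.castLE hr j) * lam j := by
      rw [← Finset.sum_subset (Finset.range_subset_range.2 hr)]
      · rw [fin_sum_ext' (fun j : Fin r => s (Fin.castLE hr j) * lam j)]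
        refine Finset.sum_congr rfl fun kk hkk => ?_
        have hkr : kk < r := mem_range.1 hkk
        have hkn : kk < n := lt_of_lt_of_le hkr hr
        rw [dif_pos hkr]
        simp only [hsN, hlamN]
        rw [dif_pos hkn, dif_pos hkr]
        rfl
      · intro x _ hx2
        have h3 : ¬ x < r := fun hh => hx2 (mem_range.2 hh)
        simp only [hlamN]
        rw [dif_neg h3, mul_zero]
    rw [h1, ← h2]
    exact habel
  -- Ky Fan for t
  have hvw_sq : ∀ kk : Fin r, ∑ j : Fin r, (v j ⬝ᵥ w kk)^2 = 1 := by
    intro kk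
    have hp := parseval v hv (w kk)
    have hww1 : w kk ⬝ᵥ w kk = 1 := by rw [hww kk kk, if_pos rfl]
    rw [hww1] at hp
    rw [← hp]
    exact Finset.sum_congr rfl fun j _ => by rw [dotProduct_comm]
  have kyfanT : ∀ k : ℕ, k ≤ r →
      ∑ jj ∈ range k, tN jj ≤ ∑ jj ∈ range k, lamN jj := by
    intro k hk
    have h1 : ∑ jj ∈ range k, tN jj
        = ∑ j ∈ univ.filter (fun j : Fin r => (j : ℕ) < k), t j := by
      simp only [htN]
      exact range_to_filter t k hk
    set I' := univ.filter (fun j : Fin r => (j : ℕ) < k) with hI'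
    set ρ' : Fin r → ℝ := fun kk => ∑ j ∈ I', (v j ⬝ᵥ w kk)^2 with hρ'
    have h2 : ∑ j ∈ I', t j = ∑ kk : Fin r, lam kk * ρ' kk := by
      rw [Finset.sum_congr rfl fun j (_ : j ∈ I') => ht_expand j, Finset.sum_comm]
      refine Finset.sum_congr rfl fun kk _ => ?_
      simp only [hρ']
      rw [Finset.mul_sum]
    have hρ'0 : ∀ kk, 0 ≤ ρ' kk := fun kk => Finset.sum_nonneg fun j _ => sq_nonneg _
    have hρ'1 : ∀ kk, ρ' kk ≤ 1 := by
      intro kk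
      have hsub : ρ' kk ≤ ∑ j : Fin r, (v j ⬝ᵥ w kk)^2 :=
        Finset.sum_le_sum_of_subset_of_nonneg (Finset.subset_univ I')
          (fun j _ _ => sq_nonneg _)
      rw [hvw_sq kk] at hsub
      exact hsub
    have hρ'sum : ∑ kk, ρ' kk ≤ (k : ℝ) := by
      have h3 : ∑ kk, ρ' kk = ∑ j ∈ I', ∑ kk : Fin r, (v j ⬝ᵥ w kk)^2 := Finset.sum_comm
      have h4 : ∀ j : Fin r, ∑ kk : Fin r, (v j ⬝ᵥ w kk)^2 = 1 := by
        intro j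
        have hp := parseval w hww (v j)
        have hvv : v j ⬝ᵥ v j = 1 := by rw [hv j j, if_pos rfl]
        rw [hvv] at hp
        exact hp
      rw [h3, Finset.sum_congr rfl fun j _ => h4 j]
      simp only [Finset.sum_const, nsmul_eq_mul, mul_one]
      exact card_filter_lt_le k
    set ρ'N : ℕ → ℝ := fun kk => if h : kk < r then ρ' ⟨kk, h⟩ else 0 with hρ'N
    have htop : ∑ jj ∈ range r, lamN jj * ρ'N jj ≤ ∑ jj ∈ range (min k r), lamN jj := by
      apply topk r k lamN ρ'N
      · intro i j hij hjr
        simp only [hlamN]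
        rw [dif_pos hjr, dif_pos (lt_of_le_of_lt hij hjr)]
        exact hlam_mono ⟨i, _⟩ ⟨j, _⟩ hij
      · intro i hi
        simp only [hlamN]
        rw [dif_pos hi]
        exact hlam_nn _
      · intro i hi
        simp only [hρ'N]
        rw [dif_pos hi]
        exact hρ'0 _
      · intro i hi
        simp only [hρ'N]
        rw [dif_pos hi]
        exact hρ'1 _
      · have he : ∑ jj ∈ range r, ρ'N jj = ∑ kk, ρ' kk := by
          rw [fin_sum_ext' ρ']
        rw [he]
        exact hρ'sum
    have h5 : ∑ kk : Fin r, lam kk * ρ' kk = ∑ jj ∈ range r, lamN jj * ρ'N jj := by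
      rw [fin_sum_ext' (fun kk => lam kk * ρ' kk)]
      refine Finset.sum_congr rfl fun kk _ => ?_
      by_cases h : kk < r
      · rw [dif_pos h]
        simp only [hlamN, hρ'N]
        rw [dif_pos h, dif_pos h]
      · rw [dif_neg h]
        simp only [hlamN, hρ'N]
        rw [dif_neg h, zero_mul]
    rw [h1, h2, h5, ← min_eq_left hk]
    exact htop
  have htotN : ∑ jj ∈ range r, tN jj = ∑ jj ∈ range r, lamN jj := by
    have h1 : ∑ j : Fin r, t j = ∑ kk : Fin r, lam kk := by
      rw [Finset.sum_congr rfl fun j (_ : j ∈ univ) => ht_expand j, Finset.sum_comm]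
      refine Finset.sum_congr rfl fun kk _ => ?_
      rw [← Finset.mul_sum, hvw_sq kk, mul_one]
    have h2 : ∑ jj ∈ range r, tN jj = ∑ j : Fin r, t j := by
      rw [fin_sum_ext' t]
    have h3 : ∑ jj ∈ range r, lamN jj = ∑ kk : Fin r, lam kk := by
      rw [fin_sum_ext' lam]
    rw [h2, h3, h1]
  have abelT : ∑ j : Fin r, d j * lam j ≤ ∑ j : Fin r, d j * t j := by
    have habel : ∑ kk ∈ range r, dN (r - 1 - kk) * lamN (r - 1 - kk)
        ≤ ∑ kk ∈ range r, dN (r - 1 - kk) * tN (r - 1 - kk) := by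
      apply abel r (fun kk => dN (r - 1 - kk)) (fun kk => lamN (r - 1 - kk))
        (fun kk => tN (r - 1 - kk))
      · intro i j hij hjr
        have hi' : r - 1 - i < r := by omega
        have hj' : r - 1 - j < r := by omega
        simp only [hdN]
        rw [dif_pos hi', dif_pos hj']
        exact hd ⟨r - 1 - j, hj'⟩ ⟨r - 1 - i, hi'⟩ (by simp only [Fin.mk_le_mk]; omega)
      · intro i hi
        simp only [hdN]
        have hi' : r - 1 - i < r := by omega
        rw [dif_pos hi']
        exact hdn _
      · intro k hk
        rw [refl_sum lamN r k hk, refl_sum tN r k hk]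
        have h1 := kyfanT (r - k) (Nat.sub_le r k)
        linarith [htotN]
    have hrefl1 := Finset.sum_range_reflect (fun kk => dN kk * lamN kk) r
    have hrefl2 := Finset.sum_range_reflect (fun kk => dN kk * tN kk) r
    have e1 : ∑ j : Fin r, d j * lam j = ∑ kk ∈ range r, dN kk * lamN kk := by
      rw [fin_sum_ext' (fun j => d j * lam j)]
      refine Finset.sum_congr rfl fun kk hkk => ?_
      have h : kk < r := mem_range.1 hkk
      rw [dif_pos h]
      simp only [hdN, hlamN]
      rw [dif_pos h, dif_pos h]
    have e2 : ∑ j : Fin r, d j * t j = ∑ kk ∈ range r, dN kk * tN kk := by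
      rw [fin_sum_ext' (fun j => d j * t j)]
      refine Finset.sum_congr rfl fun kk hkk => ?_
      have h : kk < r := mem_range.1 hkk
      rw [dif_pos h]
      simp only [hdN, htN]
      rw [dif_pos h, dif_pos h]
    rw [e1, e2, ← hrefl1, ← hrefl2]
    exact habel
  have key3 : Matrix.trace (C * C) = ∑ j : Fin r, lam j * lam j := by
    nth_rewrite 1 [hCsum]
    rw [trace_sumvmv_mul]
    refine Finset.sum_congr rfl fun j _ => ?_
    rw [heig j, dotProduct_smul, hww j j]
    simp
  have key4 : ∀ j : Fin r,
      2 * (s (Fin.castLE hr j) * lam j) - 2 * (d j * lam j) - lam j * lam j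
      ≤ (max (s (Fin.castLE hr j) - d j) 0)^2 := by
    intro j
    rcases le_or_gt (s (Fin.castLE hr j) - d j) 0 with h | h
    · rw [max_eq_right h]
      nlinarith [hlam_nn j]
    · rw [max_eq_left h.le]
      nlinarith [sq_nonneg (s (Fin.castLE hr j) - d j - lam j)]
  rw [key3]
  have hsum4 : ∑ j : Fin r,
      (2 * (s (Fin.castLE hr j) * lam j) - 2 * (d j * lam j) - lam j * lam j)
      ≤ ∑ j : Fin r, (max (s (Fin.castLE hr j) - d j) 0)^2 :=
    Finset.sum_le_sum fun j _ => key4 j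
  have hexp : ∑ j : Fin r,
      (2 * (s (Fin.castLE hr j) * lam j) - 2 * (d j * lam j) - lam j * lam j)
      = 2 * (∑ j : Fin r, s (Fin.castLE hr j) * lam j)
        - 2 * (∑ j : Fin r, d j * lam j) - ∑ j : Fin r, lam j * lam j := by
    simp only [Finset.sum_sub_distrib, Finset.mul_sum]
  linarith [abelQ, abelT, hsum4, hexp]

end Part5
end Stmt1Aux

theorem stmt_1 (n r : ℕ) (hr : r ≤ n)
    (A : Matrix (Fin n) (Fin n) ℝ) (B : Matrix (Fin r) (Fin r) ℝ)
    (s : Fin n → ℝ) (d : Fin r → ℝ)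
    (u : Fin n → Fin n → ℝ) (v : Fin r → Fin r → ℝ)
    (hu : ∀ i j, u i ⬝ᵥ u j = if i = j then (1 : ℝ) else 0)
    (hv : ∀ i j, v i ⬝ᵥ v j = if i = j then (1 : ℝ) else 0)
    (hA : A = ∑ i, s i • Matrix.vecMulVec (u i) (u i))
    (hB : B = ∑ i, d i • Matrix.vecMulVec (v i) (v i))
    (hs : ∀ i j : Fin n, i ≤ j → s j ≤ s i) (hsn : ∀ i, 0 ≤ s i)
    (hd : ∀ i j : Fin r, i ≤ j → d i ≤ d j) (hdn : ∀ i, 0 ≤ d i) :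
    IsLeast {c : ℝ | ∃ Y : Matrix (Fin n) (Fin r) ℝ,
        c = (∑ i, ∑ j, ((A - Y * Yᵀ) i j) ^ 2) + 2 * Matrix.trace (B * (Yᵀ * Y))}
      ((∑ i, (s i) ^ 2) - ∑ i : Fin r, (max (s (Fin.castLE hr i) - d i) 0) ^ 2) := by
  constructor
  · obtain ⟨Y, hY⟩ := Stmt1Aux.opt_val hr A B s d u v hu hv hA hB
    exact ⟨Y, hY.symm⟩
  · rintro c ⟨Y, rfl⟩
    exact Stmt1Aux.lower_bound hr A B s d u v hu hv hA hB hs hsn hd hdn Y
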